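/- Let 1, θ₁, θ₂ be linearly independent over ℚ. Then there exists (η₁, η₂) ∈ ℝ² such that inf_ν ‖η₁ m_{ν,1} + η₂ m_{ν,2}‖ > 0, where (m_{ν,1}, m_{ν,2}) runs over all best approximation vectors of (θ₁, θ₂) with respect to the weighted norm max(|x₁|, |x₂|²). -/

import Mathlib

open scoped BigOperators

/-- Distance from a real number to the nearest integer. -/
noncomputable def dni (x : ℝ) : ℝ := |x - round x|

/-- `1, θ₁, θ₂` are linearly independent over `ℚ` (equivalently over `ℤ`). -/
def LinIndep (θ₁ θ₂ : ℝ) : Prop :=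
  ∀ a b c : ℤ, (a : ℝ) + (b : ℝ) * θ₁ + (c : ℝ) * θ₂ = 0 → a = 0 ∧ b = 0 ∧ c = 0

/-- The weighted size `max(|m₁|, |m₂|²)` of an integer vector. -/
noncomputable def wsize (m : ℤ × ℤ) : ℝ := max |(m.1 : ℝ)| ((m.2 : ℝ) ^ 2)

/-- The value of the linear form `‖θ₁ m₁ + θ₂ m₂‖`. -/
noncomputable def zeta (θ₁ θ₂ : ℝ) (m : ℤ × ℤ) : ℝ := dni (θ₁ * m.1 + θ₂ * m.2)

/-- `M = √(max(|m₁|, |m₂|²))`. -/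
noncomputable def Mval (m : ℤ × ℤ) : ℝ := Real.sqrt (wsize m)

/-- `m = (m₁, m₂)` is a best approximation vector for `(θ₁, θ₂)` w.r.t. the
weighted norm `max(|x₁|, |x₂|²)`. -/
def IsBestApprox (θ₁ θ₂ : ℝ) (m : ℤ × ℤ) : Prop :=
  m ≠ 0 ∧ ∃ m₀ : ℤ,
    |(m₀ : ℝ) + θ₁ * m.1 + θ₂ * m.2| = zeta θ₁ θ₂ m ∧
    ∀ x₀ x₁ x₂ : ℤ,
      max |(x₁ : ℝ)| ((x₂ : ℝ) ^ 2) ≤ wsize m →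
      |(x₀ : ℝ) + θ₁ * x₁ + θ₂ * x₂| ≤ zeta θ₁ θ₂ m →
      ((x₀, x₁, x₂) = ((0 : ℤ), (0 : ℤ), (0 : ℤ)) ∨
        (x₀, x₁, x₂) = (m₀, m.1, m.2) ∨ (x₀, x₁, x₂) = (-m₀, -m.1, -m.2))

/-- An enumeration `m : ℕ → ℤ × ℤ` of all the best approximation vectors of
`(θ₁, θ₂)`, ordered so that `M_ν` is strictly increasing (each best
approximation appears up to sign). -/
def IsBestApproxSeq (θ₁ θ₂ : ℝ) (m : ℕ → ℤ × ℤ) : Prop :=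
  (∀ ν, IsBestApprox θ₁ θ₂ (m ν)) ∧
  (StrictMono fun ν => Mval (m ν)) ∧
  (∀ p : ℤ × ℤ, IsBestApprox θ₁ θ₂ p → ∃ ν, p = m ν ∨ p = -(m ν))

/-- `(η₁, η₂)` belongs to `BAD^Θ(2/3, 1/3)`. -/
def BADT (θ₁ θ₂ η₁ η₂ : ℝ) : Prop :=
  ∃ c > 0, ∀ q : ℕ, 0 < q →
    c ≤ max ((q : ℝ) ^ ((2 : ℝ) / 3) * dni (q * θ₁ - η₁))
          ((q : ℝ) ^ ((1 : ℝ) / 3) * dni (q * θ₂ - η₂))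

/-! ### Auxiliary lemmas about `dni` -/

lemma dni_nonneg (x : ℝ) : 0 ≤ dni x := abs_nonneg _

lemma dni_le (x : ℝ) (k : ℤ) : dni x ≤ |x - k| := round_le x k

lemma dni_le_half (x : ℝ) : dni x ≤ 1 / 2 := abs_sub_round x

lemma dni_neg (x : ℝ) : dni (-x) = dni x := by
  apply le_antisymm
  · calc dni (-x) ≤ |(-x) - ((-(round x) : ℤ) : ℝ)| := dni_le _ _
      _ = |x - round x| := by push_cast; rw [← abs_neg]; ring_nf
      _ = dni x := rfl
  · calc dni x ≤ |x - ((-(round (-x)) : ℤ) : ℝ)| := dni_le _ _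
      _ = |(-x) - round (-x)| := by push_cast; rw [← abs_neg]; ring_nf
      _ = dni (-x) := rfl

/-! ### Counting lemmas -/

/-- Integers `i < N` with `|A i + d| ≤ w` form a set of at most `⌊2w/|A|⌋ + 1` elements. -/
lemma card_filter_abs_le (N : ℕ) (A d w : ℝ) (hA : A ≠ 0) :
    ((Finset.range N).filter fun i : ℕ => |A * i + d| ≤ w).card ≤ ⌊2 * w / |A|⌋₊ + 1 := by
  classical
  set S := (Finset.range N).filter fun i : ℕ => |A * i + d| ≤ w with hS
  rcases S.eq_empty_or_nonempty with he | hne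
  · simp [he]
  · have hApos : 0 < |A| := abs_pos.mpr hA
    set i0 := S.min' hne with hi0
    have hi0mem : i0 ∈ S := S.min'_mem hne
    have h0 : |A * i0 + d| ≤ w := (Finset.mem_filter.mp hi0mem).2
    have hsub : S ⊆ Finset.Icc i0 (i0 + ⌊2 * w / |A|⌋₊) := by
      intro i hi
      have h1 : |A * i + d| ≤ w := (Finset.mem_filter.mp hi).2
      have hle : i0 ≤ i := Finset.min'_le S i hi
      have hdiff : |A| * ((i : ℝ) - i0) ≤ 2 * w := by
        have : |A * i + d - (A * i0 + d)| ≤ 2 * w := by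
          calc |A * i + d - (A * i0 + d)| ≤ |A * i + d| + |A * i0 + d| := by
                have := abs_sub (A * i + d) (A * i0 + d); linarith [abs_sub_abs_le_abs_sub (A * i + d) (A * i0 + d), abs_sub_comm (A * i + d) (A * i0 + d), abs_add_le (A * i + d) (-(A * i0 + d))]
            _ ≤ 2 * w := by linarith
        have h2 : A * i + d - (A * i0 + d) = A * ((i : ℝ) - i0) := by ring
        rw [h2, abs_mul] at this
        have h3 : |(i : ℝ) - (i0 : ℝ)| = (i : ℝ) - i0 := by
          rw [abs_of_nonneg]; have := Nat.cast_le (α := ℝ).mpr hle; linarith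
        rwa [h3] at this
      have hfl : (i - i0 : ℕ) ≤ ⌊2 * w / |A|⌋₊ := by
        apply Nat.le_floor
        rw [Nat.cast_sub hle]
        rw [le_div_iff₀ hApos]
        linarith [hdiff]
      exact Finset.mem_Icc.mpr ⟨hle, by omega⟩
    calc S.card ≤ (Finset.Icc i0 (i0 + ⌊2 * w / |A|⌋₊)).card := Finset.card_le_card hsub
      _ = ⌊2 * w / |A|⌋₊ + 1 := by rw [Nat.card_Icc]; omega

/-- Counting grid cells in a strip, fibered over the second coordinate. -/
lemma card_strip_row (N₁ N₂ : ℕ) (A B c w : ℝ) (hA : A ≠ 0) :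
    ((Finset.range N₁ ×ˢ Finset.range N₂).filter
      fun p : ℕ × ℕ => |A * p.1 + B * p.2 + c| ≤ w).card ≤ N₂ * (⌊2 * w / |A|⌋₊ + 1) := by
  classical
  have hsub : ((Finset.range N₁ ×ˢ Finset.range N₂).filter
      fun p : ℕ × ℕ => |A * p.1 + B * p.2 + c| ≤ w) ⊆
      (Finset.range N₂).biUnion (fun j =>
        ((Finset.range N₁).filter fun i : ℕ => |A * i + (B * j + c)| ≤ w).image
          (fun i => (i, j))) := by
    intro p hp
    rw [Finset.mem_filter, Finset.mem_product] at hp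
    obtain ⟨⟨hp1, hp2⟩, hp3⟩ := hp
    apply Finset.mem_biUnion.mpr
    refine ⟨p.2, hp2, ?_⟩
    apply Finset.mem_image.mpr
    refine ⟨p.1, ?_, rfl⟩
    rw [Finset.mem_filter]
    exact ⟨hp1, by rw [show A * p.1 + (B * p.2 + c) = A * p.1 + B * p.2 + c by ring]; exact hp3⟩
  calc ((Finset.range N₁ ×ˢ Finset.range N₂).filter
      fun p : ℕ × ℕ => |A * p.1 + B * p.2 + c| ≤ w).card
      ≤ ∑ j ∈ Finset.range N₂,
        (((Finset.range N₁).filter fun i : ℕ => |A * i + (B * j + c)| ≤ w).image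
          (fun i => (i, j))).card := le_trans (Finset.card_le_card hsub) (Finset.card_biUnion_le)
    _ ≤ ∑ _j ∈ Finset.range N₂, (⌊2 * w / |A|⌋₊ + 1) := by
        apply Finset.sum_le_sum
        intro j _
        exact le_trans Finset.card_image_le (card_filter_abs_le N₁ A (B * j + c) w hA)
    _ = N₂ * (⌊2 * w / |A|⌋₊ + 1) := by rw [Finset.sum_const, Finset.card_range, smul_eq_mul]

/-- Counting grid cells in a strip, fibered over the first coordinate. -/
lemma card_strip_col (N₁ N₂ : ℕ) (A B c w : ℝ) (hB : B ≠ 0) :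
    ((Finset.range N₁ ×ˢ Finset.range N₂).filter
      fun p : ℕ × ℕ => |A * p.1 + B * p.2 + c| ≤ w).card ≤ N₁ * (⌊2 * w / |B|⌋₊ + 1) := by
  classical
  have hsub : ((Finset.range N₁ ×ˢ Finset.range N₂).filter
      fun p : ℕ × ℕ => |A * p.1 + B * p.2 + c| ≤ w) ⊆
      (Finset.range N₁).biUnion (fun i =>
        ((Finset.range N₂).filter fun j : ℕ => |B * j + (A * i + c)| ≤ w).image
          (fun j => (i, j))) := by
    intro p hp
    rw [Finset.mem_filter, Finset.mem_product] at hp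
    obtain ⟨⟨hp1, hp2⟩, hp3⟩ := hp
    apply Finset.mem_biUnion.mpr
    refine ⟨p.1, hp1, ?_⟩
    apply Finset.mem_image.mpr
    refine ⟨p.2, ?_, rfl⟩
    rw [Finset.mem_filter]
    exact ⟨hp2, by rw [show B * p.2 + (A * p.1 + c) = A * p.1 + B * p.2 + c by ring]; exact hp3⟩
  calc ((Finset.range N₁ ×ˢ Finset.range N₂).filter
      fun p : ℕ × ℕ => |A * p.1 + B * p.2 + c| ≤ w).card
      ≤ ∑ i ∈ Finset.range N₁,
        (((Finset.range N₂).filter fun j : ℕ => |B * j + (A * i + c)| ≤ w).image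
          (fun j => (i, j))).card := le_trans (Finset.card_le_card hsub) (Finset.card_biUnion_le)
    _ ≤ ∑ _i ∈ Finset.range N₁, (⌊2 * w / |B|⌋₊ + 1) := by
        apply Finset.sum_le_sum
        intro i _
        exact le_trans Finset.card_image_le (card_filter_abs_le N₂ B (A * i + c) w hB)
    _ = N₁ * (⌊2 * w / |B|⌋₊ + 1) := by rw [Finset.sum_const, Finset.card_range, smul_eq_mul]
/-! ### Normalized best approximations -/

/-- A best approximation vector, normalized so that the linear form error is positive. -/
def NBest (θ₁ θ₂ : ℝ) (m : ℤ × ℤ) : Prop :=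
  m ≠ 0 ∧ ∃ m₀ : ℤ,
    ((m₀ : ℝ) + θ₁ * m.1 + θ₂ * m.2 = zeta θ₁ θ₂ m) ∧
    ∀ x₀ x₁ x₂ : ℤ,
      max |(x₁ : ℝ)| ((x₂ : ℝ) ^ 2) ≤ wsize m →
      |(x₀ : ℝ) + θ₁ * x₁ + θ₂ * x₂| ≤ zeta θ₁ θ₂ m →
      ((x₀, x₁, x₂) = ((0 : ℤ), (0 : ℤ), (0 : ℤ)) ∨
        (x₀, x₁, x₂) = (m₀, m.1, m.2) ∨ (x₀, x₁, x₂) = (-m₀, -m.1, -m.2))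

lemma zeta_pos {θ₁ θ₂ : ℝ} (h : LinIndep θ₁ θ₂) {m : ℤ × ℤ} (hm : m ≠ 0) :
    0 < zeta θ₁ θ₂ m := by
  rcases lt_or_eq_of_le (dni_nonneg (θ₁ * m.1 + θ₂ * m.2)) with hlt | heq
  · exact hlt
  · exfalso
    have h0 : |θ₁ * m.1 + θ₂ * m.2 - round (θ₁ * m.1 + θ₂ * m.2)| = 0 := heq.symm
    rw [abs_eq_zero, sub_eq_zero] at h0
    have := h (-(round (θ₁ * m.1 + θ₂ * m.2))) m.1 m.2 (by push_cast; linarith)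
    exact hm (Prod.ext this.2.1 this.2.2)

lemma zeta_lt_half {θ₁ θ₂ : ℝ} (h : LinIndep θ₁ θ₂) {m : ℤ × ℤ} (hm : m ≠ 0) :
    zeta θ₁ θ₂ m < 1 / 2 := by
  rcases lt_or_eq_of_le (dni_le_half (θ₁ * m.1 + θ₂ * m.2)) with hlt | heq
  · exact hlt
  · exfalso
    rcases (abs_eq (by norm_num : (0:ℝ) ≤ 1/2)).mp heq with h1 | h1
    · have h2 := h (-2 * round (θ₁ * m.1 + θ₂ * m.2) - 1) (2 * m.1) (2 * m.2)
        (by push_cast; linear_combination (2:ℝ) * h1)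
      have := h2.1; omega
    · have h2 := h (-2 * round (θ₁ * m.1 + θ₂ * m.2) + 1) (2 * m.1) (2 * m.2)
        (by push_cast; linear_combination (2:ℝ) * h1)
      have := h2.1; omega

lemma zeta_neg (θ₁ θ₂ : ℝ) (m : ℤ × ℤ) : zeta θ₁ θ₂ (-m) = zeta θ₁ θ₂ m := by
  have : θ₁ * ((-m).1 : ℝ) + θ₂ * ((-m).2 : ℝ) = -(θ₁ * m.1 + θ₂ * m.2) := by
    rw [Prod.fst_neg, Prod.snd_neg]; push_cast; ring
  rw [zeta, this, dni_neg]; rfl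

lemma wsize_neg (m : ℤ × ℤ) : wsize (-m) = wsize m := by
  rw [wsize, wsize, Prod.fst_neg, Prod.snd_neg]; push_cast
  rw [abs_neg, neg_sq]

lemma wsize_nonneg (m : ℤ × ℤ) : 0 ≤ wsize m :=
  le_trans (abs_nonneg _) (le_max_left _ _)

lemma one_le_wsize {m : ℤ × ℤ} (hm : m ≠ 0) : 1 ≤ wsize m := by
  have : m.1 ≠ 0 ∨ m.2 ≠ 0 := by
    by_contra hc; push_neg at hc; exact hm (Prod.ext hc.1 hc.2)
  rcases this with h1 | h2
  · have : (1 : ℝ) ≤ |(m.1 : ℝ)| := by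
      rw [← Int.cast_abs]; exact_mod_cast Int.one_le_abs h1
    exact le_trans this (le_max_left _ _)
  · have h2' : (1 : ℤ) ≤ |m.2| := Int.one_le_abs h2
    have : (1 : ℝ) ≤ ((m.2 : ℝ)) ^ 2 := by
      have : (1 : ℝ) ≤ |(m.2 : ℝ)| := by rw [← Int.cast_abs]; exact_mod_cast h2'
      nlinarith [sq_abs ((m.2 : ℝ)), abs_nonneg ((m.2 : ℝ))]
    exact le_trans this (le_max_right _ _)

/-- Every best approximation has a normalized representative among `m, -m`. -/
lemma best_to_nbest {θ₁ θ₂ : ℝ} (h : LinIndep θ₁ θ₂) {m : ℤ × ℤ}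
    (hb : IsBestApprox θ₁ θ₂ m) : NBest θ₁ θ₂ m ∨ NBest θ₁ θ₂ (-m) := by
  obtain ⟨hm0, m₀, habs, hall⟩ := hb
  have hzpos : 0 < zeta θ₁ θ₂ m := zeta_pos h hm0
  rcases abs_eq (le_of_lt hzpos) |>.mp habs with he | he
  · exact Or.inl ⟨hm0, m₀, he, hall⟩
  · right
    refine ⟨neg_ne_zero.mpr hm0, -m₀, ?_, ?_⟩
    · rw [Prod.fst_neg, Prod.snd_neg, zeta_neg]
      push_cast
      linarith
    · intro x₀ x₁ x₂ hbnd hf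
      rw [wsize_neg] at hbnd
      rw [zeta_neg] at hf
      rcases hall x₀ x₁ x₂ hbnd hf with h1 | h2 | h3
      · exact Or.inl h1
      · right; right
        simp only [Prod.fst_neg, Prod.snd_neg, neg_neg]
        exact h2
      · right; left
        rw [Prod.fst_neg, Prod.snd_neg]
        exact h3

/-- Two distinct normalized best approximations are never negatives of each other. -/
lemma nbest_no_pair {θ₁ θ₂ : ℝ} (h : LinIndep θ₁ θ₂) {m m' : ℤ × ℤ}
    (hm : NBest θ₁ θ₂ m) (hm' : NBest θ₁ θ₂ m') (hne : m' = -m) : False := by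
  obtain ⟨hm0, m₀, he, _⟩ := hm
  obtain ⟨hm0', m₀', he', _⟩ := hm'
  have hz : zeta θ₁ θ₂ m' = zeta θ₁ θ₂ m := by rw [hne, zeta_neg]
  have hzpos : 0 < zeta θ₁ θ₂ m := zeta_pos h hm0
  have hzh : zeta θ₁ θ₂ m < 1 / 2 := zeta_lt_half h hm0
  have hcoord1 : ((m'.1 : ℝ)) = -(m.1 : ℝ) := by rw [hne, Prod.fst_neg]; push_cast; ring
  have hcoord2 : ((m'.2 : ℝ)) = -(m.2 : ℝ) := by rw [hne, Prod.snd_neg]; push_cast; ring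
  rw [hcoord1, hcoord2, hz] at he'
  -- m₀ + m₀' = 2ζ ∈ (0,1)
  have hsum : ((m₀ + m₀' : ℤ) : ℝ) = 2 * zeta θ₁ θ₂ m := by push_cast; linarith
  have h0 : (0 : ℝ) < ((m₀ + m₀' : ℤ) : ℝ) := by rw [hsum]; linarith
  have h1 : ((m₀ + m₀' : ℤ) : ℝ) < 1 := by rw [hsum]; linarith
  have h0' : 0 < m₀ + m₀' := by exact_mod_cast h0
  have h1' : m₀ + m₀' < 1 := by exact_mod_cast h1
  omega

/-- Monotonicity of the linear form values along the chain of best approximations. -/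
lemma zeta_chain {θ₁ θ₂ : ℝ} (h : LinIndep θ₁ θ₂) {m m' : ℤ × ℤ}
    (hm : NBest θ₁ θ₂ m) (hm' : NBest θ₁ θ₂ m')
    (hW : wsize m ≤ wsize m') (hne1 : m' ≠ m) (hne2 : m' ≠ -m) :
    zeta θ₁ θ₂ m' < zeta θ₁ θ₂ m := by
  by_contra hc
  push_neg at hc
  obtain ⟨hm0, m₀, he, _⟩ := hm
  obtain ⟨hm0', m₀', _, hall'⟩ := hm'
  have hzpos : 0 < zeta θ₁ θ₂ m := zeta_pos h hm0
  have hbnd : max |(m.1 : ℝ)| ((m.2 : ℝ) ^ 2) ≤ wsize m' := hW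
  have hf : |(m₀ : ℝ) + θ₁ * m.1 + θ₂ * m.2| ≤ zeta θ₁ θ₂ m' := by
    rw [he, abs_of_pos hzpos]; exact hc
  rcases hall' m₀ m.1 m.2 hbnd hf with h1 | h2 | h3
  · have e1 : m.1 = 0 := by
      have := congrArg (fun t : ℤ × ℤ × ℤ => t.2.1) h1; simpa using this
    have e2 : m.2 = 0 := by
      have := congrArg (fun t : ℤ × ℤ × ℤ => t.2.2) h1; simpa using this
    exact hm0 (Prod.ext e1 e2)
  · have e1 : m'.1 = m.1 := by
      have := congrArg (fun t : ℤ × ℤ × ℤ => t.2.1) h2; simpa using this.symm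
    have e2 : m'.2 = m.2 := by
      have := congrArg (fun t : ℤ × ℤ × ℤ => t.2.2) h2; simpa using this.symm
    exact hne1 (Prod.ext e1 e2)
  · have e1 : m'.1 = -m.1 := by
      have := congrArg (fun t : ℤ × ℤ × ℤ => t.2.1) h3
      simp at this; omega
    have e2 : m'.2 = -m.2 := by
      have := congrArg (fun t : ℤ × ℤ × ℤ => t.2.2) h3
      simp at this; omega
    exact hne2 (by rw [Prod.ext_iff]; constructor <;> simp [e1, e2])

/-- Separation: two distinct normalized best approximations cannot be close. -/
lemma separation {θ₁ θ₂ : ℝ} (h : LinIndep θ₁ θ₂) {m m' : ℤ × ℤ}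
    (hm : NBest θ₁ θ₂ m) (hm' : NBest θ₁ θ₂ m')
    (hW : wsize m ≤ wsize m') (hne1 : m' ≠ m)
    (hsep : max |((m'.1 - m.1 : ℤ) : ℝ)| (((m'.2 - m.2 : ℤ) : ℝ) ^ 2) ≤ wsize m) :
    False := by
  have hne2 : m' ≠ -m := fun hc => nbest_no_pair h hm hm' hc
  have hzlt : zeta θ₁ θ₂ m' < zeta θ₁ θ₂ m := zeta_chain h hm hm' hW hne1 hne2
  obtain ⟨hm0, m₀, he, hall⟩ := hm
  obtain ⟨hm0', m₀', he', _⟩ := hm'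
  have hzpos : 0 < zeta θ₁ θ₂ m := zeta_pos h hm0
  have hzpos' : 0 < zeta θ₁ θ₂ m' := zeta_pos h hm0'
  have hf : |((m₀' - m₀ : ℤ) : ℝ) + θ₁ * ((m'.1 - m.1 : ℤ) : ℝ) + θ₂ * ((m'.2 - m.2 : ℤ) : ℝ)|
      ≤ zeta θ₁ θ₂ m := by
    have hkey : ((m₀' - m₀ : ℤ) : ℝ) + θ₁ * ((m'.1 - m.1 : ℤ) : ℝ) + θ₂ * ((m'.2 - m.2 : ℤ) : ℝ)
        = zeta θ₁ θ₂ m' - zeta θ₁ θ₂ m := by push_cast; linarith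
    rw [hkey, abs_of_nonpos (by linarith)]
    linarith
  rcases hall (m₀' - m₀) (m'.1 - m.1) (m'.2 - m.2) hsep hf with h1 | h2 | h3
  · -- difference zero : m' = m
    have e1 : m'.1 - m.1 = 0 := by
      have := congrArg (fun t : ℤ × ℤ × ℤ => t.2.1) h1; simpa using this
    have e2 : m'.2 - m.2 = 0 := by
      have := congrArg (fun t : ℤ × ℤ × ℤ => t.2.2) h1; simpa using this
    exact hne1 (Prod.ext (by omega) (by omega))
  · -- difference equals m : m' = 2m, so ζ' = 2ζ > ζ, contradiction
    have e0 : m₀' - m₀ = m₀ := by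
      have := congrArg (fun t : ℤ × ℤ × ℤ => t.1) h2; simpa using this
    have e1 : m'.1 - m.1 = m.1 := by
      have := congrArg (fun t : ℤ × ℤ × ℤ => t.2.1) h2; simpa using this
    have e2 : m'.2 - m.2 = m.2 := by
      have := congrArg (fun t : ℤ × ℤ × ℤ => t.2.2) h2; simpa using this
    have hz2 : zeta θ₁ θ₂ m' = 2 * zeta θ₁ θ₂ m := by
      have c0 : ((m₀' : ℤ) : ℝ) = 2 * (m₀ : ℝ) := by
        have : m₀' = 2 * m₀ := by omega
        rw [this]; push_cast; ring
      have c1 : ((m'.1 : ℤ) : ℝ) = 2 * (m.1 : ℝ) := by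
        have : m'.1 = 2 * m.1 := by omega
        rw [this]; push_cast; ring
      have c2 : ((m'.2 : ℤ) : ℝ) = 2 * (m.2 : ℝ) := by
        have : m'.2 = 2 * m.2 := by omega
        rw [this]; push_cast; ring
      rw [c0, c1, c2] at he'
      linarith
    linarith
  · -- difference equals -m : m' = 0, contradiction
    have e1 : m'.1 - m.1 = -m.1 := by
      have := congrArg (fun t : ℤ × ℤ × ℤ => t.2.1) h3; simpa using this
    have e2 : m'.2 - m.2 = -m.2 := by
      have := congrArg (fun t : ℤ × ℤ × ℤ => t.2.2) h3; simpa using this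
    refine hm0' ?_
    have f1 : m'.1 = 0 := by omega
    have f2 : m'.2 = 0 := by omega
    exact Prod.ext f1 f2
/-! ### The integer weighted size and per-scale counting -/

/-- Integer version of `wsize`. -/
def iW (m : ℤ × ℤ) : ℕ := max m.1.natAbs (m.2.natAbs ^ 2)

lemma wsize_eq_iW (m : ℤ × ℤ) : wsize m = (iW m : ℝ) := by
  rw [wsize, iW, Nat.cast_max]
  congr 1
  · rw [Nat.cast_natAbs, Int.cast_abs]
  · push_cast
    rw [Nat.cast_natAbs, Int.cast_abs, sq_abs]

lemma natAbs_fst_le_iW (m : ℤ × ℤ) : m.1.natAbs ≤ iW m := le_max_left _ _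
lemma natAbs_snd_sq_le_iW (m : ℤ × ℤ) : m.2.natAbs ^ 2 ≤ iW m := le_max_right _ _

/-- If two integers have the same euclidean quotient by `d > 0`, they differ by less than `d`. -/
lemma abs_sub_lt_of_ediv_eq {a b d : ℤ} (hd : 0 < d) (hab : a / d = b / d) : |a - b| < d := by
  have ha := Int.mul_ediv_add_emod a d
  have hb := Int.mul_ediv_add_emod b d
  have ha1 : 0 ≤ a % d := Int.emod_nonneg a (ne_of_gt hd)
  have ha2 : a % d < d := Int.emod_lt_of_pos a hd
  have hb1 : 0 ≤ b % d := Int.emod_nonneg b (ne_of_gt hd)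
  have hb2 : b % d < d := Int.emod_lt_of_pos b hd
  rw [abs_lt]
  constructor <;> nlinarith [hab]

/-- Quotient bounds: if `-2d ≤ a ≤ 2d - 1` then `a / d ∈ [-2, 1]`. -/
lemma ediv_mem_bounds {a d : ℤ} (hd : 0 < d) (hlo : -(2 * d) ≤ a) (hhi : a ≤ 2 * d - 1) :
    -2 ≤ a / d ∧ a / d ≤ 1 := by
  constructor
  · have h1 : (-2) * d / d = -2 := Int.mul_ediv_cancel (-2) (ne_of_gt hd)
    have := Int.ediv_le_ediv hd (show (-2) * d ≤ a by linarith)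
    rwa [h1] at this
  · have h2 : (d - 1 + 1 * d) / d = (d - 1) / d + 1 := Int.add_mul_ediv_right (d - 1) 1 (ne_of_gt hd)
    have h3 : (d - 1) / d = 0 := Int.ediv_eq_zero_of_lt (by linarith) (by linarith)
    have := Int.ediv_le_ediv hd (show a ≤ d - 1 + 1 * d by linarith)
    rw [h2, h3] at this
    linarith

/-- Auxiliary: two distinct normalized best approximations at scale `≥ 2^j` cannot be
within `2^j` of each other. -/
lemma sep_aux {θ₁ θ₂ : ℝ} (h : LinIndep θ₁ θ₂) {m m' : ℤ × ℤ} (j : ℕ)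
    (hm : NBest θ₁ θ₂ m) (hm' : NBest θ₁ θ₂ m') (hne : m ≠ m')
    (hdm : 2 ^ j ≤ iW m) (hdm' : 2 ^ j ≤ iW m')
    (h1 : |m'.1 - m.1| < (2 : ℤ) ^ j) (h2 : (m'.2 - m.2) ^ 2 ≤ (2 : ℤ) ^ j - 1) : False := by
  have hcast : ∀ p : ℤ × ℤ, 2 ^ j ≤ iW p → ((2 : ℝ) ^ j) ≤ wsize p := by
    intro p hp
    rw [wsize_eq_iW]
    exact_mod_cast hp
  have h1' : |m'.1 - m.1| ≤ (2 : ℤ) ^ j - 1 := by omega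
  rcases le_total (wsize m) (wsize m') with hle | hle
  · refine separation h hm hm' hle (Ne.symm hne) ?_
    apply max_le
    · have : ((|m'.1 - m.1| : ℤ) : ℝ) ≤ ((2 : ℤ) ^ j - 1 : ℤ) := by exact_mod_cast h1'
      rw [Int.cast_abs] at this
      calc |((m'.1 - m.1 : ℤ) : ℝ)| ≤ (((2 : ℤ) ^ j - 1 : ℤ) : ℝ) := this
        _ ≤ (2 : ℝ) ^ j := by push_cast; linarith
        _ ≤ wsize m := hcast m hdm
    · have : (((m'.2 - m.2) ^ 2 : ℤ) : ℝ) ≤ (((2 : ℤ) ^ j - 1 : ℤ) : ℝ) := by exact_mod_cast h2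
      calc ((m'.2 - m.2 : ℤ) : ℝ) ^ 2 = (((m'.2 - m.2) ^ 2 : ℤ) : ℝ) := by push_cast; ring
        _ ≤ (((2 : ℤ) ^ j - 1 : ℤ) : ℝ) := this
        _ ≤ (2 : ℝ) ^ j := by push_cast; linarith
        _ ≤ wsize m := hcast m hdm
  · refine separation h hm' hm hle hne ?_
    apply max_le
    · have h1'' : |m.1 - m'.1| ≤ (2 : ℤ) ^ j - 1 := by rw [abs_sub_comm]; exact h1'
      have : ((|m.1 - m'.1| : ℤ) : ℝ) ≤ ((2 : ℤ) ^ j - 1 : ℤ) := by exact_mod_cast h1''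
      rw [Int.cast_abs] at this
      calc |((m.1 - m'.1 : ℤ) : ℝ)| ≤ (((2 : ℤ) ^ j - 1 : ℤ) : ℝ) := this
        _ ≤ (2 : ℝ) ^ j := by push_cast; linarith
        _ ≤ wsize m' := hcast m' hdm'
    · have h2'' : (m.2 - m'.2) ^ 2 ≤ (2 : ℤ) ^ j - 1 := by nlinarith [h2]
      have : (((m.2 - m'.2) ^ 2 : ℤ) : ℝ) ≤ (((2 : ℤ) ^ j - 1 : ℤ) : ℝ) := by exact_mod_cast h2''
      calc ((m.2 - m'.2 : ℤ) : ℝ) ^ 2 = (((m.2 - m'.2) ^ 2 : ℤ) : ℝ) := by push_cast; ring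
        _ ≤ (((2 : ℤ) ^ j - 1 : ℤ) : ℝ) := this
        _ ≤ (2 : ℝ) ^ j := by push_cast; linarith
        _ ≤ wsize m' := hcast m' hdm'

open Classical in
noncomputable def Pfin (θ₁ θ₂ : ℝ) (n : ℕ) : Finset (ℤ × ℤ) :=
  (Finset.Icc (-(2 ^ (32 * n + 32) : ℤ)) (2 ^ (32 * n + 32)) ×ˢ
    Finset.Icc (-(2 ^ (16 * n + 16) : ℤ)) (2 ^ (16 * n + 16))).filter
    (fun m => NBest θ₁ θ₂ m ∧ 2 ^ (32 * n) ≤ iW m ∧ iW m < 2 ^ (32 * n + 32))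

lemma mem_Pfin {θ₁ θ₂ : ℝ} {n : ℕ} {m : ℤ × ℤ} (hN : NBest θ₁ θ₂ m)
    (hlo : 2 ^ (32 * n) ≤ iW m) (hhi : iW m < 2 ^ (32 * n + 32)) :
    m ∈ Pfin θ₁ θ₂ n := by
  classical
  rw [Pfin, Finset.mem_filter, Finset.mem_product]
  refine ⟨⟨?_, ?_⟩, hN, hlo, hhi⟩
  · rw [Finset.mem_Icc]
    have h1 : m.1.natAbs ≤ 2 ^ (32 * n + 32) := le_trans (natAbs_fst_le_iW m) (le_of_lt hhi)
    have h2 : |m.1| ≤ (2 ^ (32 * n + 32) : ℤ) := by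
      rw [Int.abs_eq_natAbs]; exact_mod_cast h1
    rw [abs_le] at h2
    exact h2
  · rw [Finset.mem_Icc]
    have h1 : m.2.natAbs ^ 2 < 2 ^ (32 * n + 32) := lt_of_le_of_lt (natAbs_snd_sq_le_iW m) hhi
    have h2 : m.2.natAbs < 2 ^ (16 * n + 16) := by
      by_contra hc
      push_neg at hc
      have := Nat.pow_le_pow_left hc 2
      rw [← pow_mul] at this
      have heq : 16 * n + 16 = 32 * n + 32 → False := by omega
      have : 2 ^ (32 * n + 32) ≤ m.2.natAbs ^ 2 := by
        calc (2:ℕ) ^ (32 * n + 32) = 2 ^ ((16 * n + 16) * 2) := by ring_nf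
          _ ≤ m.2.natAbs ^ 2 := this
      omega
    have h3 : |m.2| ≤ (2 ^ (16 * n + 16) : ℤ) := by
      rw [Int.abs_eq_natAbs]; exact_mod_cast le_of_lt h2
    rw [abs_le] at h3
    exact h3

set_option linter.constructorNameAsVariable false in
/-- The key counting bound: at most `512` normalized best approximations per scale. -/
lemma card_Pfin {θ₁ θ₂ : ℝ} (h : LinIndep θ₁ θ₂) (n : ℕ) :
    (Pfin θ₁ θ₂ n).card ≤ 512 := by
  classical
  have htarget : (Finset.range 32 ×ˢ (Finset.Icc (-2 : ℤ) 1 ×ˢ Finset.Icc (-2 : ℤ) 1)).card = 512 := by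
    rw [Finset.card_product, Finset.card_product, Finset.card_range, Int.card_Icc]
    rfl
  rw [← htarget]
  apply Finset.card_le_card_of_injOn
    (fun m => (Nat.log 2 (iW m) - 32 * n,
      (m.1 / (2 : ℤ) ^ (Nat.log 2 (iW m)), m.2 / (2 : ℤ) ^ (Nat.log 2 (iW m) / 2))))
  · -- membership
    intro m hm
    rw [Pfin, Finset.mem_coe, Finset.mem_filter] at hm
    obtain ⟨hbox, hN, hlo, hhi⟩ := hm
    have hone : (1:ℕ) ≤ 2 ^ (32 * n) := Nat.one_le_two_pow
    have hiW0 : iW m ≠ 0 := by omega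
    set j := Nat.log 2 (iW m) with hj
    have hj1 : 32 * n ≤ j := Nat.le_log_of_pow_le (by norm_num) hlo
    have hj2 : j < 32 * n + 32 := Nat.log_lt_of_lt_pow hiW0 hhi
    have hdle : 2 ^ j ≤ iW m := Nat.pow_log_le_self 2 hiW0
    have hlt : iW m < 2 ^ (j + 1) := Nat.lt_pow_succ_log_self (by norm_num) _
    have hd : (0:ℤ) < 2 ^ j := by positivity
    -- first coordinate
    have hm1a : |m.1| ≤ (iW m : ℤ) := by
      rw [Int.abs_eq_natAbs]; exact_mod_cast natAbs_fst_le_iW m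
    have hupZ : (iW m : ℤ) ≤ 2 * 2 ^ j - 1 := by
      have h1 : (iW m : ℤ) < ((2 ^ (j+1) : ℕ) : ℤ) := by exact_mod_cast hlt
      have h2 : ((2 ^ (j+1) : ℕ) : ℤ) = 2 * 2 ^ j := by push_cast; ring
      omega
    have habs1 := abs_le.mp hm1a
    have hc1 := ediv_mem_bounds hd (show -(2 * 2 ^ j) ≤ m.1 by omega)
      (show m.1 ≤ 2 * 2 ^ j - 1 by omega)
    -- second coordinate
    have hw : (0:ℤ) < 2 ^ (j / 2) := by positivity
    have hsq : m.2.natAbs ^ 2 < 2 ^ (2 * (j / 2) + 2) := by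
      calc m.2.natAbs ^ 2 ≤ iW m := natAbs_snd_sq_le_iW m
        _ < 2 ^ (j + 1) := hlt
        _ ≤ 2 ^ (2 * (j / 2) + 2) := Nat.pow_le_pow_right (by norm_num) (by omega)
    have hnat2 : m.2.natAbs < 2 ^ (j / 2 + 1) := by
      by_contra hc
      push_neg at hc
      have h1 := Nat.pow_le_pow_left hc 2
      rw [← pow_mul] at h1
      have h2 : (j / 2 + 1) * 2 = 2 * (j / 2) + 2 := by ring
      rw [h2] at h1
      omega
    have hm2a : |m.2| ≤ 2 * 2 ^ (j / 2) - 1 := by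
      rw [Int.abs_eq_natAbs]
      have h1 : (m.2.natAbs : ℤ) < ((2 ^ (j / 2 + 1) : ℕ) : ℤ) := by exact_mod_cast hnat2
      have h2 : ((2 ^ (j / 2 + 1) : ℕ) : ℤ) = 2 * 2 ^ (j / 2) := by push_cast; ring
      omega
    have habs2 := abs_le.mp hm2a
    have hc2 := ediv_mem_bounds hw (show -(2 * 2 ^ (j / 2)) ≤ m.2 by omega)
      (show m.2 ≤ 2 * 2 ^ (j / 2) - 1 by omega)
    -- assemble membership
    beta_reduce
    rw [Finset.mem_coe, Finset.mem_product, Finset.mem_product]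
    refine ⟨Finset.mem_range.mpr (by omega), Finset.mem_Icc.mpr ⟨hc1.1, hc1.2⟩,
      Finset.mem_Icc.mpr ⟨hc2.1, hc2.2⟩⟩
  · -- injectivity
    intro m hm m' hm' heq
    by_contra hne
    rw [Pfin] at hm hm'
    rw [Finset.mem_coe, Finset.mem_filter] at hm hm'
    obtain ⟨_, hN, hlo, hhi⟩ := hm
    obtain ⟨_, hN', hlo', hhi'⟩ := hm'
    have hone : (1:ℕ) ≤ 2 ^ (32 * n) := Nat.one_le_two_pow
    have hiW0 : iW m ≠ 0 := by omega
    have hiW0' : iW m' ≠ 0 := by omega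
    set j := Nat.log 2 (iW m) with hj
    set j' := Nat.log 2 (iW m') with hj'
    have hj1 : 32 * n ≤ j := Nat.le_log_of_pow_le (by norm_num) hlo
    have hj1' : 32 * n ≤ j' := Nat.le_log_of_pow_le (by norm_num) hlo'
    have heq1 : j - 32 * n = j' - 32 * n := congrArg Prod.fst heq
    have hjj : j = j' := by omega
    have heq2 : m.1 / (2:ℤ) ^ j = m'.1 / (2:ℤ) ^ j := by
      have h0 := congrArg (fun p : ℕ × ℤ × ℤ => p.2.1) heq
      simp only at h0
      rw [← hj, ← hj', ← hjj] at h0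
      exact h0
    have heq3 : m.2 / (2:ℤ) ^ (j / 2) = m'.2 / (2:ℤ) ^ (j / 2) := by
      have h0 := congrArg (fun p : ℕ × ℤ × ℤ => p.2.2) heq
      simp only at h0
      rw [← hj, ← hj', ← hjj] at h0
      exact h0
    have hdle : 2 ^ j ≤ iW m := Nat.pow_log_le_self 2 hiW0
    have hdle' : 2 ^ j ≤ iW m' := by rw [hjj]; exact Nat.pow_log_le_self 2 hiW0'
    have hd : (0:ℤ) < 2 ^ j := by positivity
    have hw : (0:ℤ) < 2 ^ (j / 2) := by positivity
    have h1 : |m'.1 - m.1| < (2:ℤ) ^ j := abs_sub_lt_of_ediv_eq hd heq2.symm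
    have h2a : |m'.2 - m.2| < (2:ℤ) ^ (j / 2) := abs_sub_lt_of_ediv_eq hw heq3.symm
    have h2 : (m'.2 - m.2) ^ 2 ≤ (2:ℤ) ^ j - 1 := by
      have hab : |m'.2 - m.2| ≤ (2:ℤ) ^ (j / 2) - 1 := by omega
      have hsq : (m'.2 - m.2) ^ 2 ≤ ((2:ℤ) ^ (j / 2) - 1) ^ 2 := by
        rw [← sq_abs]
        exact pow_le_pow_left₀ (abs_nonneg _) hab 2
      have hpow : ((2:ℤ) ^ (j / 2)) ^ 2 ≤ (2:ℤ) ^ j := by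
        rw [← pow_mul]
        exact pow_le_pow_right₀ (by norm_num) (by omega)
      nlinarith [hw]
    exact sep_aux h j hN hN' hne hdle hdle' h1 h2
/-! ### The Cantor-type stage lemma -/

noncomputable def gam : ℝ := ((2:ℝ) ^ (96:ℕ))⁻¹
noncomputable def Ubox (n : ℕ) : ℝ := ((2:ℝ) ^ (32 * n + 32))⁻¹
noncomputable def Vbox (n : ℕ) : ℝ := ((2:ℝ) ^ (16 * n + 32))⁻¹

lemma gam_pos : 0 < gam := by rw [gam]; positivity
lemma Ubox_pos (n : ℕ) : 0 < Ubox n := by rw [Ubox]; positivity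
lemma Vbox_pos (n : ℕ) : 0 < Vbox n := by rw [Vbox]; positivity

lemma two_pow_cast (e : ℕ) : (((2:ℕ) ^ e : ℕ) : ℝ) = (2:ℝ) ^ e := by push_cast; ring

lemma pow_mul_inv_pow_le_one {s t : ℕ} (hst : s ≤ t) : (2:ℝ) ^ s * ((2:ℝ) ^ t)⁻¹ ≤ 1 := by
  rw [← div_eq_mul_inv, div_le_one (by positivity)]
  exact pow_le_pow_right₀ one_le_two hst

lemma natAbs_bounds_of_iW_lt {m : ℤ × ℤ} {n : ℕ} (hhi : iW m < 2 ^ (32 * n + 32)) :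
    m.1.natAbs < 2 ^ (32 * n + 32) ∧ m.2.natAbs < 2 ^ (16 * n + 16) := by
  constructor
  · exact lt_of_le_of_lt (natAbs_fst_le_iW m) hhi
  · have h1 : m.2.natAbs ^ 2 < 2 ^ (32 * n + 32) := lt_of_le_of_lt (natAbs_snd_sq_le_iW m) hhi
    by_contra hc
    push_neg at hc
    have h2 := Nat.pow_le_pow_left hc 2
    rw [← pow_mul] at h2
    have h3 : (2:ℕ) ^ ((16 * n + 16) * 2) = 2 ^ (32 * n + 32) := by ring_nf
    omega

lemma abs_cast_le_pow {x : ℤ} {e : ℕ} (hx : x.natAbs < 2 ^ e) : |(x : ℝ)| ≤ (2:ℝ) ^ e := by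
  have h : ((x.natAbs : ℕ) : ℝ) ≤ (((2:ℕ) ^ e : ℕ) : ℝ) := by exact_mod_cast le_of_lt hx
  rw [Nat.cast_natAbs, Int.cast_abs, two_pow_cast] at h
  exact h

lemma pow_le_abs_cast {x : ℤ} {e : ℕ} (hx : 2 ^ e ≤ x.natAbs) : (2:ℝ) ^ e ≤ |(x : ℝ)| := by
  have h : (((2:ℕ) ^ e : ℕ) : ℝ) ≤ ((x.natAbs : ℕ) : ℝ) := by exact_mod_cast hx
  rw [Nat.cast_natAbs, Int.cast_abs, two_pow_cast] at h
  exact h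

attribute [local irreducible] Pfin

set_option linter.constructorNameAsVariable false in
set_option maxHeartbeats 12000000 in
lemma stage {θ₁ θ₂ : ℝ} (h : LinIndep θ₁ θ₂) (n : ℕ) (a b : ℝ) :
    ∃ a' b' : ℝ, a ≤ a' ∧ a' + Ubox (n+1) ≤ a + Ubox n ∧ b ≤ b' ∧
      b' + Vbox (n+1) ≤ b + Vbox n ∧
      ∀ m : ℤ × ℤ, NBest θ₁ θ₂ m → 2 ^ (32 * n) ≤ iW m → iW m < 2 ^ (32 * n + 32) →
      ∀ η₁ η₂ : ℝ, a' ≤ η₁ → η₁ ≤ a' + Ubox (n+1) → b' ≤ η₂ → η₂ ≤ b' + Vbox (n+1) →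
        gam < dni (η₁ * m.1 + η₂ * m.2) := by
  classical
  obtain ⟨N1, hN1⟩ : ∃ x : ℕ, x = 2 ^ 32 := ⟨_, rfl⟩
  obtain ⟨N2, hN2⟩ : ∃ x : ℕ, x = 2 ^ 16 := ⟨_, rfl⟩
  set u' : ℝ := Ubox (n+1) with hu'
  set v' : ℝ := Vbox (n+1) with hv'
  have hu'pos : 0 < u' := Ubox_pos (n+1)
  have hv'pos : 0 < v' := Vbox_pos (n+1)
  have hu'val : u' = ((2:ℝ) ^ (32 * n + 64))⁻¹ := by
    rw [hu', Ubox, show 32 * (n+1) + 32 = 32 * n + 64 by ring]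
  have hv'val : v' = ((2:ℝ) ^ (16 * n + 48))⁻¹ := by
    rw [hv', Vbox, show 16 * (n+1) + 32 = 16 * n + 48 by ring]
  have hN1R : (N1 : ℝ) = (2:ℝ) ^ (32:ℕ) := by rw [hN1]; exact two_pow_cast 32
  have hN2R : (N2 : ℝ) = (2:ℝ) ^ (16:ℕ) := by rw [hN2]; exact two_pow_cast 16
  have hUsum : (N1 : ℝ) * u' = Ubox n := by
    rw [hN1R, hu'val, Ubox, show 32 * n + 64 = (32 * n + 32) + 32 by ring, pow_add]
    have h1 : ((2:ℝ) ^ (32 * n + 32)) ≠ 0 := by positivity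
    have h2 : ((2:ℝ) ^ (32:ℕ)) ≠ 0 := by positivity
    field_simp
  have hVsum : (N2 : ℝ) * v' = Vbox n := by
    rw [hN2R, hv'val, Vbox, show 16 * n + 48 = (16 * n + 32) + 16 by ring, pow_add]
    have h1 : ((2:ℝ) ^ (16 * n + 32)) ≠ 0 := by positivity
    have h2 : ((2:ℝ) ^ (16:ℕ)) ≠ 0 := by positivity
    field_simp
  have hmain : ∃ i j : ℕ, i < N1 ∧ j < N2 ∧
      (∀ m : ℤ × ℤ, NBest θ₁ θ₂ m → 2 ^ (32 * n) ≤ iW m → iW m < 2 ^ (32 * n + 32) →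
      ∀ η₁ η₂ : ℝ, a + i * u' ≤ η₁ → η₁ ≤ a + i * u' + u' →
        b + j * v' ≤ η₂ → η₂ ≤ b + j * v' + v' →
        gam < dni (η₁ * m.1 + η₂ * m.2)) := by
    by_contra hbad
    push_neg at hbad
    set G : Finset (ℕ × ℕ) := Finset.range N1 ×ˢ Finset.range N2 with hG
    set Bad : ℤ × ℤ → ℤ → Finset (ℕ × ℕ) := fun m k =>
      G.filter (fun p : ℕ × ℕ =>
        |(m.1 : ℝ) * u' * p.1 + (m.2 : ℝ) * v' * p.2 +
          ((m.1 : ℝ) * a + (m.2 : ℝ) * b - k)| ≤ gam + |(m.1 : ℝ) * u'| + |(m.2 : ℝ) * v'|)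
      with hBad
    set k0 : ℤ × ℤ → ℤ := fun m => ⌈(m.1 : ℝ) * a + (m.2 : ℝ) * b⌉ - 4 with hk0
    -- covering
    have hcover : G ⊆ (Pfin θ₁ θ₂ n).biUnion
        (fun m => (Finset.Icc (k0 m) (k0 m + 7)).biUnion (fun k => Bad m k)) := by
      intro p hp
      have hp' := Finset.mem_product.mp hp
      have hp1 : p.1 < N1 := Finset.mem_range.mp hp'.1
      have hp2 : p.2 < N2 := Finset.mem_range.mp hp'.2
      have hnb := hbad p.1 p.2 hp1 hp2
      clear hbad
      obtain ⟨m, hN, hlo, hhi, η₁, η₂, ha1, ha2, hb1, hb2, hdni⟩ := hnb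
      have hmem : m ∈ Pfin θ₁ θ₂ n := mem_Pfin hN hlo hhi
      set T : ℝ := η₁ * m.1 + η₂ * m.2 with hT
      set k : ℤ := round T with hk
      have hkT : |T - k| ≤ gam := by rw [hk]; exact hdni
      obtain ⟨hn1, hn2⟩ := natAbs_bounds_of_iW_lt hhi
      have hm1 : |(m.1 : ℝ)| ≤ (2:ℝ) ^ (32 * n + 32) := abs_cast_le_pow hn1
      have hm2 : |(m.2 : ℝ)| ≤ (2:ℝ) ^ (16 * n + 16) := abs_cast_le_pow hn2
      -- η is in the big box
      have hieta1 : |η₁ - a| ≤ Ubox n := by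
        rw [abs_le]
        have h1 : (0:ℝ) ≤ (p.1 : ℝ) * u' := mul_nonneg (Nat.cast_nonneg p.1) (le_of_lt hu'pos)
        have hc : (p.1 : ℝ) + 1 ≤ (N1 : ℝ) := by exact_mod_cast Nat.succ_le_of_lt hp1
        have h2 : ((p.1 : ℝ) + 1) * u' ≤ (N1 : ℝ) * u' :=
          mul_le_mul_of_nonneg_right hc (le_of_lt hu'pos)
        constructor
        · linarith [Ubox_pos n, ha1, h1]
        · linarith [ha2, hUsum, h2]
      have hieta2 : |η₂ - b| ≤ Vbox n := by
        rw [abs_le]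
        have h1 : (0:ℝ) ≤ (p.2 : ℝ) * v' := mul_nonneg (Nat.cast_nonneg p.2) (le_of_lt hv'pos)
        have hc : (p.2 : ℝ) + 1 ≤ (N2 : ℝ) := by exact_mod_cast Nat.succ_le_of_lt hp2
        have h2 : ((p.2 : ℝ) + 1) * v' ≤ (N2 : ℝ) * v' :=
          mul_le_mul_of_nonneg_right hc (le_of_lt hv'pos)
        constructor
        · linarith [Vbox_pos n, hb1, h1]
        · linarith [hb2, hVsum, h2]
      -- |T - cab| ≤ 2
      set cab : ℝ := (m.1 : ℝ) * a + (m.2 : ℝ) * b with hcab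
      have hTc : |T - cab| ≤ 2 := by
        have e : T - cab = (m.1 : ℝ) * (η₁ - a) + (m.2 : ℝ) * (η₂ - b) := by
          rw [hT, hcab]; ring
        have h1 : |(m.1 : ℝ) * (η₁ - a)| ≤ 1 := by
          rw [abs_mul]
          calc |(m.1 : ℝ)| * |η₁ - a| ≤ (2:ℝ) ^ (32 * n + 32) * Ubox n :=
              mul_le_mul hm1 hieta1 (abs_nonneg _) (by positivity)
            _ = 1 := by rw [Ubox, mul_inv_cancel₀ (by positivity)]
        have h2 : |(m.2 : ℝ) * (η₂ - b)| ≤ 1 := by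
          rw [abs_mul]
          calc |(m.2 : ℝ)| * |η₂ - b| ≤ (2:ℝ) ^ (16 * n + 16) * Vbox n :=
              mul_le_mul hm2 hieta2 (abs_nonneg _) (by positivity)
            _ ≤ 1 := by
              rw [Vbox]
              exact pow_mul_inv_pow_le_one (by omega)
        calc |T - cab| = |(m.1 : ℝ) * (η₁ - a) + (m.2 : ℝ) * (η₂ - b)| := by rw [e]
          _ ≤ |(m.1 : ℝ) * (η₁ - a)| + |(m.2 : ℝ) * (η₂ - b)| := abs_add_le _ _
          _ ≤ 2 := by linarith
      have hgam1 : gam ≤ 1 := by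
        rw [gam, inv_le_one_iff₀]
        right
        exact one_le_pow₀ one_le_two
      have hkmem : k ∈ Finset.Icc (k0 m) (k0 m + 7) := by
        rw [Finset.mem_Icc]
        have habs1 := abs_le.mp hkT
        have habs2 := abs_le.mp hTc
        have hceil1 : cab ≤ (⌈cab⌉ : ℝ) := Int.le_ceil cab
        have hceil2 : (⌈cab⌉ : ℝ) < cab + 1 := Int.ceil_lt_add_one cab
        constructor
        · have : ((k0 m : ℤ) : ℝ) ≤ (k : ℝ) := by
            rw [hk0]; push_cast; linarith
          exact_mod_cast this
        · have : (k : ℝ) ≤ ((k0 m + 7 : ℤ) : ℝ) := by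
            rw [hk0]; push_cast; linarith
          exact_mod_cast this
      have hstrip : p ∈ Bad m k := by
        rw [hBad]
        refine Finset.mem_filter.mpr ⟨hp, ?_⟩
        have e : (m.1 : ℝ) * u' * p.1 + (m.2 : ℝ) * v' * p.2 + ((m.1 : ℝ) * a + (m.2 : ℝ) * b - k)
            = (T - k) - ((m.1 : ℝ) * (η₁ - (a + p.1 * u')) + (m.2 : ℝ) * (η₂ - (b + p.2 * v'))) := by
          rw [hT]; ring
        rw [e]
        have h1 : |(m.1 : ℝ) * (η₁ - (a + p.1 * u'))| ≤ |(m.1 : ℝ) * u'| := by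
          rw [abs_mul, abs_mul]
          apply mul_le_mul_of_nonneg_left _ (abs_nonneg _)
          rw [abs_of_pos hu'pos, abs_le]
          constructor <;> linarith [ha1, ha2]
        have h2 : |(m.2 : ℝ) * (η₂ - (b + p.2 * v'))| ≤ |(m.2 : ℝ) * v'| := by
          rw [abs_mul, abs_mul]
          apply mul_le_mul_of_nonneg_left _ (abs_nonneg _)
          rw [abs_of_pos hv'pos, abs_le]
          constructor <;> linarith [hb1, hb2]
        calc |(T - k) - ((m.1 : ℝ) * (η₁ - (a + p.1 * u')) + (m.2 : ℝ) * (η₂ - (b + p.2 * v')))|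
            ≤ |T - k| + |(m.1 : ℝ) * (η₁ - (a + p.1 * u')) + (m.2 : ℝ) * (η₂ - (b + p.2 * v'))| :=
              abs_sub _ _
          _ ≤ |T - k| + (|(m.1 : ℝ) * (η₁ - (a + p.1 * u'))| + |(m.2 : ℝ) * (η₂ - (b + p.2 * v'))|) := by
              linarith [abs_add_le ((m.1 : ℝ) * (η₁ - (a + p.1 * u'))) ((m.2 : ℝ) * (η₂ - (b + p.2 * v')))]
          _ ≤ gam + |(m.1 : ℝ) * u'| + |(m.2 : ℝ) * v'| := by linarith
      exact Finset.mem_biUnion.mpr ⟨m, hmem, Finset.mem_biUnion.mpr ⟨k, hkmem, hstrip⟩⟩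
    -- cardinality bound for a single strip
    have hN2leN1 : N2 ≤ N1 := by rw [hN1, hN2]; norm_num
    have hBadcard : ∀ m ∈ Pfin θ₁ θ₂ n, ∀ k : ℤ, (Bad m k).card ≤ 6 * N1 := by
      intro m hmem k
      rw [Pfin, Finset.mem_filter] at hmem
      obtain ⟨_, hN, hlo, hhi⟩ := hmem
      set A : ℝ := (m.1 : ℝ) * u' with hA
      set B : ℝ := (m.2 : ℝ) * v' with hB
      set w : ℝ := gam + |A| + |B| with hw
      have hwpos : 0 ≤ w := by
        have h1 := gam_pos
        have h2 := abs_nonneg A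
        have h3 := abs_nonneg B
        rw [hw]; linarith
      have hmaxAB : ((2:ℝ) ^ (64:ℕ))⁻¹ ≤ max |A| |B| := by
        rw [iW] at hlo
        rcases le_max_iff.mp hlo with hc1 | hc2
        · have hm1 : (2:ℝ) ^ (32 * n) ≤ |(m.1 : ℝ)| := pow_le_abs_cast hc1
          apply le_trans _ (le_max_left _ _)
          rw [hA, abs_mul, abs_of_pos hu'pos, hu'val]
          calc ((2:ℝ) ^ (64:ℕ))⁻¹
              = (2:ℝ) ^ (32 * n) * ((2:ℝ) ^ (32 * n + 64))⁻¹ := by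
                rw [show 32 * n + 64 = 32 * n + 64 from rfl, pow_add, mul_inv, ← mul_assoc,
                  mul_inv_cancel₀ (by positivity : ((2:ℝ) ^ (32 * n)) ≠ 0), one_mul]
            _ ≤ |(m.1 : ℝ)| * ((2:ℝ) ^ (32 * n + 64))⁻¹ :=
                mul_le_mul_of_nonneg_right hm1 (by positivity)
        · have hnat : 2 ^ (16 * n) ≤ m.2.natAbs := by
            by_contra hcc
            push_neg at hcc
            have h2 := Nat.pow_lt_pow_left hcc (two_ne_zero)
            rw [← pow_mul] at h2
            have he : 16 * n * 2 = 32 * n := by ring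
            rw [he] at h2
            omega
          have hm2 : (2:ℝ) ^ (16 * n) ≤ |(m.2 : ℝ)| := pow_le_abs_cast hnat
          apply le_trans _ (le_max_right _ _)
          rw [hB, abs_mul, abs_of_pos hv'pos, hv'val]
          calc ((2:ℝ) ^ (64:ℕ))⁻¹
              ≤ ((2:ℝ) ^ (48:ℕ))⁻¹ := by
                apply inv_anti₀ (by positivity)
                exact pow_le_pow_right₀ one_le_two (by norm_num)
            _ = (2:ℝ) ^ (16 * n) * ((2:ℝ) ^ (16 * n + 48))⁻¹ := by
                rw [pow_add, mul_inv, ← mul_assoc,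
                  mul_inv_cancel₀ (by positivity : ((2:ℝ) ^ (16 * n)) ≠ 0), one_mul]
            _ ≤ |(m.2 : ℝ)| * ((2:ℝ) ^ (16 * n + 48))⁻¹ :=
                mul_le_mul_of_nonneg_right hm2 (by positivity)
      have hgamlt : gam < ((2:ℝ) ^ (64:ℕ))⁻¹ := by
        rw [gam]
        apply inv_strictAnti₀ (by positivity)
        exact pow_lt_pow_right₀ one_lt_two (by norm_num)
      rcases le_total |B| |A| with hAB | hAB
      · -- rows
        have hAlow : ((2:ℝ) ^ (64:ℕ))⁻¹ ≤ |A| := by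
          rw [max_eq_left hAB] at hmaxAB; exact hmaxAB
        have hAne : A ≠ 0 := by
          intro hc
          rw [hc, abs_zero] at hAlow
          have : (0:ℝ) < ((2:ℝ) ^ (64:ℕ))⁻¹ := by positivity
          linarith
        have hcount := card_strip_row N1 N2 A B
          ((m.1 : ℝ) * a + (m.2 : ℝ) * b - k) w hAne
        have hfl : ⌊2 * w / |A|⌋₊ + 1 ≤ 6 := by
          have hApos : (0:ℝ) < |A| := abs_pos.mpr hAne
          have hlt : 2 * w / |A| < 6 := by
            rw [div_lt_iff₀ hApos, hw]
            linarith [hgamlt, hAlow, hAB]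
          have h6 : ⌊2 * w / |A|⌋₊ < (6:ℕ) := by
            apply (Nat.floor_lt (div_nonneg (by linarith) (abs_nonneg A))).mpr
            exact_mod_cast hlt
          omega
        calc (Bad m k).card ≤ N2 * (⌊2 * w / |A|⌋₊ + 1) := hcount
          _ ≤ N2 * 6 := Nat.mul_le_mul_left _ hfl
          _ ≤ N1 * 6 := Nat.mul_le_mul_right _ hN2leN1
          _ = 6 * N1 := Nat.mul_comm _ _
      · -- columns
        have hBlow : ((2:ℝ) ^ (64:ℕ))⁻¹ ≤ |B| := by
          rw [max_eq_right hAB] at hmaxAB; exact hmaxAB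
        have hBne : B ≠ 0 := by
          intro hc
          rw [hc, abs_zero] at hBlow
          have : (0:ℝ) < ((2:ℝ) ^ (64:ℕ))⁻¹ := by positivity
          linarith
        have hcount := card_strip_col N1 N2 A B
          ((m.1 : ℝ) * a + (m.2 : ℝ) * b - k) w hBne
        have hfl : ⌊2 * w / |B|⌋₊ + 1 ≤ 6 := by
          have hBpos : (0:ℝ) < |B| := abs_pos.mpr hBne
          have hlt : 2 * w / |B| < 6 := by
            rw [div_lt_iff₀ hBpos, hw]
            linarith [hgamlt, hBlow, hAB]
          have h6 : ⌊2 * w / |B|⌋₊ < (6:ℕ) := by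
            apply (Nat.floor_lt (div_nonneg (by linarith) (abs_nonneg B))).mpr
            exact_mod_cast hlt
          omega
        calc (Bad m k).card ≤ N1 * (⌊2 * w / |B|⌋₊ + 1) := hcount
          _ ≤ N1 * 6 := Nat.mul_le_mul_left _ hfl
          _ = 6 * N1 := Nat.mul_comm _ _
    -- the contradiction
    have hGcard : G.card = N1 * N2 := by
      rw [hG, Finset.card_product, Finset.card_range, Finset.card_range]
    have hle : G.card ≤ (Pfin θ₁ θ₂ n).card * (8 * (6 * N1)) := by
      calc G.card ≤ ((Pfin θ₁ θ₂ n).biUnion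
          (fun m => (Finset.Icc (k0 m) (k0 m + 7)).biUnion (fun k => Bad m k))).card :=
            Finset.card_le_card hcover
        _ ≤ ∑ m ∈ Pfin θ₁ θ₂ n,
            ((Finset.Icc (k0 m) (k0 m + 7)).biUnion (fun k => Bad m k)).card :=
            Finset.card_biUnion_le
        _ ≤ ∑ _m ∈ Pfin θ₁ θ₂ n, (8 * (6 * N1)) := by
            apply Finset.sum_le_sum
            intro m hm
            calc ((Finset.Icc (k0 m) (k0 m + 7)).biUnion (fun k => Bad m k)).card
                ≤ ∑ k ∈ Finset.Icc (k0 m) (k0 m + 7), (Bad m k).card := Finset.card_biUnion_le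
              _ ≤ ∑ _k ∈ Finset.Icc (k0 m) (k0 m + 7), (6 * N1) := by
                  apply Finset.sum_le_sum
                  intro k _
                  exact hBadcard m hm k
              _ = 8 * (6 * N1) := by
                  rw [Finset.sum_const, Int.card_Icc, smul_eq_mul]
                  have h8 : (k0 m + 7 + 1 - k0 m : ℤ) = 8 := by ring
                  rw [h8]
                  rfl
        _ = (Pfin θ₁ θ₂ n).card * (8 * (6 * N1)) := by
            rw [Finset.sum_const, smul_eq_mul]
    have hle2 : N1 * N2 ≤ 512 * (8 * (6 * N1)) := by
      rw [← hGcard]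
      exact le_trans hle (Nat.mul_le_mul_right _ (card_Pfin h n))
    rw [hN1, hN2] at hle2
    norm_num at hle2
  -- use the good cell
  obtain ⟨i, j, hi, hj, hpgood⟩ := hmain
  refine ⟨a + i * u', b + j * v', ?_, ?_, ?_, ?_, hpgood⟩
  · have h0 : (0:ℝ) ≤ (i : ℝ) * u' := mul_nonneg (Nat.cast_nonneg i) (le_of_lt hu'pos)
    linarith
  · have h2 : ((i : ℝ) + 1) * u' ≤ (N1 : ℝ) * u' := by
      apply mul_le_mul_of_nonneg_right _ (le_of_lt hu'pos)
      exact_mod_cast Nat.succ_le_of_lt hi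
    linarith [hUsum, h2]
  · have h0 : (0:ℝ) ≤ (j : ℝ) * v' := mul_nonneg (Nat.cast_nonneg j) (le_of_lt hv'pos)
    linarith
  · have h2 : ((j : ℝ) + 1) * v' ≤ (N2 : ℝ) * v' := by
      apply mul_le_mul_of_nonneg_right _ (le_of_lt hv'pos)
      exact_mod_cast Nat.succ_le_of_lt hj
    linarith [hVsum, h2]
/-! ### Iterating the construction and the main theorem -/

lemma iW_neg (m : ℤ × ℤ) : iW (-m) = iW m := by
  rw [iW, iW, Prod.fst_neg, Prod.snd_neg, Int.natAbs_neg, Int.natAbs_neg]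

lemma one_le_iW {m : ℤ × ℤ} (hm : m ≠ 0) : 1 ≤ iW m := by
  have : m.1 ≠ 0 ∨ m.2 ≠ 0 := by
    by_contra hc; push_neg at hc; exact hm (Prod.ext hc.1 hc.2)
  rcases this with h1 | h2
  · have := Int.natAbs_pos.mpr h1
    calc 1 ≤ m.1.natAbs := this
      _ ≤ iW m := natAbs_fst_le_iW m
  · have h3 := Int.natAbs_pos.mpr h2
    calc 1 ≤ m.2.natAbs ^ 2 := Nat.one_le_pow _ _ h3
      _ ≤ iW m := natAbs_snd_sq_le_iW m

lemma exists_eta {θ₁ θ₂ : ℝ} (h : LinIndep θ₁ θ₂) :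
    ∃ η₁ η₂ : ℝ, ∀ n : ℕ, ∀ m : ℤ × ℤ, NBest θ₁ θ₂ m →
      2 ^ (32 * n) ≤ iW m → iW m < 2 ^ (32 * n + 32) →
      gam < dni (η₁ * m.1 + η₂ * m.2) := by
  classical
  -- the recursively defined nested rectangles
  let F : ℕ → ℝ × ℝ → ℝ × ℝ := fun n p =>
    ⟨(stage h n p.1 p.2).choose, (stage h n p.1 p.2).choose_spec.choose⟩
  let seq : ℕ → ℝ × ℝ := fun n => Nat.rec ((0:ℝ), (0:ℝ)) (fun k p => F k p) n
  have hseq : ∀ n, seq (n + 1) = F n (seq n) := fun n => rfl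
  set A : ℕ → ℝ := fun n => (seq n).1 with hA
  set B : ℕ → ℝ := fun n => (seq n).2 with hB
  have hspec : ∀ n : ℕ,
      A n ≤ A (n+1) ∧ A (n+1) + Ubox (n+1) ≤ A n + Ubox n ∧
      B n ≤ B (n+1) ∧ B (n+1) + Vbox (n+1) ≤ B n + Vbox n ∧
      (∀ m : ℤ × ℤ, NBest θ₁ θ₂ m → 2 ^ (32 * n) ≤ iW m → iW m < 2 ^ (32 * n + 32) →
      ∀ x y : ℝ, A (n+1) ≤ x → x ≤ A (n+1) + Ubox (n+1) → B (n+1) ≤ y →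
        y ≤ B (n+1) + Vbox (n+1) → gam < dni (x * m.1 + y * m.2)) := by
    intro n
    have hs := (stage h n (A n) (B n)).choose_spec.choose_spec
    have e1 : A (n+1) = (stage h n (A n) (B n)).choose := rfl
    have e2 : B (n+1) = (stage h n (A n) (B n)).choose_spec.choose := rfl
    rw [e1, e2]
    exact hs
  -- monotonicity
  have hmonoA : Monotone A := monotone_nat_of_le_succ (fun n => (hspec n).1)
  have hmonoB : Monotone B := monotone_nat_of_le_succ (fun n => (hspec n).2.2.1)
  have hantiA : Antitone (fun n => A n + Ubox n) :=
    antitone_nat_of_succ_le (fun n => (hspec n).2.1)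
  have hantiB : Antitone (fun n => B n + Vbox n) :=
    antitone_nat_of_succ_le (fun n => (hspec n).2.2.2.1)
  have hbddA : BddAbove (Set.range A) := by
    refine ⟨A 0 + Ubox 0, ?_⟩
    rintro x ⟨n, rfl⟩
    calc A n ≤ A n + Ubox n := by linarith [Ubox_pos n]
      _ ≤ A 0 + Ubox 0 := hantiA (Nat.zero_le n)
  have hbddB : BddAbove (Set.range B) := by
    refine ⟨B 0 + Vbox 0, ?_⟩
    rintro x ⟨n, rfl⟩
    calc B n ≤ B n + Vbox n := by linarith [Vbox_pos n]
      _ ≤ B 0 + Vbox 0 := hantiB (Nat.zero_le n)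
  set η₁ : ℝ := ⨆ n, A n with hη₁
  set η₂ : ℝ := ⨆ n, B n with hη₂
  have hlow1 : ∀ n, A n ≤ η₁ := fun n => le_ciSup hbddA n
  have hlow2 : ∀ n, B n ≤ η₂ := fun n => le_ciSup hbddB n
  have hup1 : ∀ n, η₁ ≤ A n + Ubox n := by
    intro n
    apply ciSup_le
    intro k
    calc A k ≤ A (max k n) := hmonoA (le_max_left _ _)
      _ ≤ A (max k n) + Ubox (max k n) := by linarith [Ubox_pos (max k n)]
      _ ≤ A n + Ubox n := hantiA (le_max_right _ _)
  have hup2 : ∀ n, η₂ ≤ B n + Vbox n := by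
    intro n
    apply ciSup_le
    intro k
    calc B k ≤ B (max k n) := hmonoB (le_max_left _ _)
      _ ≤ B (max k n) + Vbox (max k n) := by linarith [Vbox_pos (max k n)]
      _ ≤ B n + Vbox n := hantiB (le_max_right _ _)
  refine ⟨η₁, η₂, ?_⟩
  intro n m hN hlo hhi
  exact (hspec n).2.2.2.2 m hN hlo hhi η₁ η₂ (hlow1 (n+1)) (hup1 (n+1))
    (hlow2 (n+1)) (hup2 (n+1))

/-- there is `(η₁, η₂)` with the linear form at all best
approximation vectors bounded away from zero. -/
theorem stmt_9 (θ₁ θ₂ : ℝ) (h : LinIndep θ₁ θ₂) :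
    ∃ η₁ η₂ : ℝ, ∃ γ > (0 : ℝ), ∀ m : ℤ × ℤ, IsBestApprox θ₁ θ₂ m →
      γ ≤ dni (η₁ * m.1 + η₂ * m.2) := by
  obtain ⟨η₁, η₂, hη⟩ := exists_eta h
  refine ⟨η₁, η₂, gam, gam_pos, ?_⟩
  intro m hbest
  -- scale decomposition for a normalized representative
  have key : ∀ m' : ℤ × ℤ, NBest θ₁ θ₂ m' → gam < dni (η₁ * m'.1 + η₂ * m'.2) := by
    intro m' hN
    have hm0 : m' ≠ 0 := hN.1
    have h1 : 1 ≤ iW m' := one_le_iW hm0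
    have hiW0 : iW m' ≠ 0 := by omega
    set j := Nat.log 2 (iW m') with hj
    set n := j / 32 with hn
    have hd1 : 2 ^ (32 * n) ≤ iW m' := by
      calc (2:ℕ) ^ (32 * n) ≤ 2 ^ j := Nat.pow_le_pow_right (by norm_num) (by omega)
        _ ≤ iW m' := Nat.pow_log_le_self 2 hiW0
    have hd2 : iW m' < 2 ^ (32 * n + 32) := by
      calc iW m' < 2 ^ (j + 1) := Nat.lt_pow_succ_log_self (by norm_num) _
        _ ≤ 2 ^ (32 * n + 32) := Nat.pow_le_pow_right (by norm_num) (by omega)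
    exact hη n m' hN hd1 hd2
  rcases best_to_nbest h hbest with hN | hN
  · exact le_of_lt (key m hN)
  · have := key (-m) hN
    have e : η₁ * ((-m).1 : ℝ) + η₂ * ((-m).2 : ℝ) = -(η₁ * m.1 + η₂ * m.2) := by
      rw [Prod.fst_neg, Prod.snd_neg]; push_cast; ring
    rw [e, dni_neg] at this
    exact le_of_lt this
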